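/- Let (X_t) be a strictly stationary sequence and suppose there are sequences a_r > 0, b_r ∈ ℝ, γ ∈ ℝ such that (max(X_1,…,X_r) − b_r)/a_r converges in distribution to G_γ, and a_{⌊rs⌋}/a_r → s^γ, (b_{⌊rs⌋} − b_r)/a_r → (s^γ−1)/γ for all s > 0. If the observations consist of i.i.d. copies of length-r stretches of (X_t) concatenated (sampling scheme (S2)), then for every ξ ∈ [0,1] the sliding block maximum over indices {1+⌊rξ⌋, …, r+⌊rξ⌋}, affinely rescaled by (a_r, b_r), converges in distribution to G_γ as r → ∞. -/

import Mathlib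

open MeasureTheory ProbabilityTheory Real Filter Topology

/-- `(1+γx)^(-1/γ)`, interpreted as `exp (-x)` for `γ = 0`. -/
noncomputable def gevTail (γ x : ℝ) : ℝ :=
  if γ = 0 then Real.exp (-x) else (1 + γ * x) ^ (-1 / γ)


lemma sbm_limsup_le {f g : ℕ → ℝ} {c : ℝ}
    (hfg : ∀ᶠ r in atTop, f r ≤ g r) (hg : Tendsto g atTop (𝓝 c))
    (hbd : ∀ᶠ r in atTop, 0 ≤ f r) :
    limsup f atTop ≤ c := by
  rw [← hg.limsup_eq]
  exact limsup_le_limsup hfg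
    (IsBoundedUnder.isCoboundedUnder_le ⟨0, by simpa using hbd⟩)
    hg.isBoundedUnder_le

lemma sbm_le_liminf {f g : ℕ → ℝ} {c : ℝ}
    (hgf : ∀ᶠ r in atTop, g r ≤ f r) (hg : Tendsto g atTop (𝓝 c))
    (hbd : ∀ᶠ r in atTop, f r ≤ 1) :
    c ≤ liminf f atTop := by
  rw [← hg.liminf_eq]
  exact liminf_le_liminf hgf hg.isBoundedUnder_ge
    (IsBoundedUnder.isCoboundedUnder_ge ⟨1, by simpa using hbd⟩)

lemma sbm_floor_atTop {s : ℝ} (hs : 0 < s) :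
    Tendsto (fun r : ℕ => ⌊(r : ℝ) * s⌋₊) atTop atTop :=
  tendsto_nat_floor_atTop.comp (tendsto_natCast_atTop_atTop.atTop_mul_const hs)

lemma sbm_floor_div {s : ℝ} (hs : 0 ≤ s) :
    Tendsto (fun r : ℕ => (⌊(r : ℝ) * s⌋₊ : ℝ) / r) atTop (𝓝 s) := by
  have h1 : Tendsto (fun r : ℕ => s - 1 / (r : ℝ)) atTop (𝓝 s) := by
    have := tendsto_one_div_atTop_nhds_zero_nat (𝕜 := ℝ)
    simpa using tendsto_const_nhds.sub this
  apply tendsto_of_tendsto_of_tendsto_of_le_of_le' h1 tendsto_const_nhds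
  · filter_upwards [eventually_ge_atTop 1] with r hr
    have hr0 : (0:ℝ) < (r:ℝ) := by exact_mod_cast hr
    rw [sub_le_iff_le_add, ← add_div, le_div_iff₀ hr0]
    have h := Nat.lt_floor_add_one ((r:ℝ) * s)
    nlinarith [h]
  · filter_upwards [eventually_ge_atTop 1] with r hr
    have hr0 : (0:ℝ) < (r:ℝ) := by exact_mod_cast hr
    rw [div_le_iff₀ hr0]
    have := Nat.floor_le (by positivity : (0:ℝ) ≤ (r:ℝ) * s)
    linarith

lemma sbm_gev_contAt {γ y : ℝ} (hy : 1 + γ * y > 0) :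
    ContinuousAt (fun z => Real.exp (-gevTail γ z)) y := by
  apply ContinuousAt.rexp
  apply ContinuousAt.neg
  unfold gevTail
  by_cases hγ : γ = 0
  · simp only [hγ, if_true]
    exact (Real.continuous_exp.comp continuous_neg).continuousAt
  · simp only [hγ, if_false]
    exact ((continuousAt_const.add (continuousAt_const.mul continuousAt_id)).rpow_const
      (Or.inl (ne_of_gt hy)))

lemma sbm_lemC (F : ℕ → ℝ → ℝ)
    (hFm : ∀ m, Monotone (F m))
    (hF0 : ∀ m u, 0 ≤ F m u) (hF1 : ∀ m u, F m u ≤ 1)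
    (a b : ℕ → ℝ) (γ : ℝ) (ha : ∀ r, 0 < a r) {s : ℝ} (hs : 0 < s)
    (hascale : Tendsto (fun r : ℕ => a ⌊(r : ℝ) * s⌋₊ / a r) atTop (𝓝 (s ^ γ)))
    (hbscale : Tendsto (fun r : ℕ => (b ⌊(r : ℝ) * s⌋₊ - b r) / a r) atTop
        (𝓝 (if γ = 0 then Real.log s else (s ^ γ - 1) / γ)))
    (hlim : ∀ z : ℝ, 1 + γ * z > 0 →
      Tendsto (fun r : ℕ => F r (a r * z + b r)) atTop (𝓝 (Real.exp (-gevTail γ z))))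
    (x : ℝ) (hx : 1 + γ * x > 0) :
    Tendsto (fun r : ℕ => F ⌊(r : ℝ) * s⌋₊ (a r * x + b r)) atTop
      (𝓝 (Real.exp (-(s * gevTail γ x)))) := by
  set c : ℝ := if γ = 0 then Real.log s else (s ^ γ - 1) / γ with hc
  set y : ℝ := if γ = 0 then x - Real.log s else x * s ^ (-γ) + (s ^ (-γ) - 1) / γ with hydef
  have hsγ : (0:ℝ) < s ^ γ := Real.rpow_pos_of_pos hs γ
  have hsnγ : (0:ℝ) < s ^ (-γ) := Real.rpow_pos_of_pos hs _
  have hmulγ : s ^ γ * s ^ (-γ) = 1 := by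
    rw [← Real.rpow_add hs]; simp
  have hxy : s ^ γ * y + c = x := by
    by_cases hγ : γ = 0
    · simp [hydef, hc, hγ]
    · simp only [hydef, hc, hγ, if_false]
      field_simp
      nlinarith [hmulγ]
  have h1γ : γ ≠ 0 → 1 + γ * y = s ^ (-γ) * (1 + γ * x) := by
    intro hγ
    simp only [hydef, hγ, if_false]
    field_simp; ring
  have hy : 1 + γ * y > 0 := by
    by_cases hγ : γ = 0
    · simp [hγ]
    · rw [h1γ hγ]; positivity
  have htail : gevTail γ y = s * gevTail γ x := by
    by_cases hγ : γ = 0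
    · simp only [gevTail, hγ, if_true, hydef]
      rw [show -(x - Real.log s) = Real.log s + -x by ring, Real.exp_add, Real.exp_log hs]
    · simp only [gevTail, hγ, if_false]
      rw [h1γ hγ, Real.mul_rpow (le_of_lt hsnγ) (le_of_lt hx), ← Real.rpow_mul (le_of_lt hs)]
      have : -γ * (-1 / γ) = 1 := by field_simp
      rw [this, Real.rpow_one]
  set f : ℕ → ℝ := fun r : ℕ => F ⌊(r : ℝ) * s⌋₊ (a r * x + b r) with hf
  have key_up : ∀ y' : ℝ, y < y' → 1 + γ * y' > 0 →
      limsup f atTop ≤ Real.exp (-gevTail γ y') := by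
    intro y' hyy' hy'
    have hconv : Tendsto (fun r : ℕ =>
        (a ⌊(r:ℝ)*s⌋₊ / a r) * y' + (b ⌊(r:ℝ)*s⌋₊ - b r)/a r)
        atTop (𝓝 (s ^ γ * y' + c)) := (hascale.mul_const y').add hbscale
    have hlt : x < s ^ γ * y' + c := by
      nlinarith [hxy, mul_lt_mul_of_pos_left hyy' hsγ]
    have hev : ∀ᶠ r : ℕ in atTop,
        a r * x + b r ≤ a ⌊(r:ℝ)*s⌋₊ * y' + b ⌊(r:ℝ)*s⌋₊ := by
      filter_upwards [hconv.eventually_const_lt hlt] with r hr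
      rw [div_mul_eq_mul_div, ← add_div, lt_div_iff₀ (ha r)] at hr
      nlinarith [hr]
    have hle : ∀ᶠ r : ℕ in atTop,
        f r ≤ F ⌊(r:ℝ)*s⌋₊ (a ⌊(r:ℝ)*s⌋₊ * y' + b ⌊(r:ℝ)*s⌋₊) := by
      filter_upwards [hev] with r hr
      exact hFm _ hr
    have hg : Tendsto (fun r : ℕ => F ⌊(r:ℝ)*s⌋₊ (a ⌊(r:ℝ)*s⌋₊ * y' + b ⌊(r:ℝ)*s⌋₊)) atTop
        (𝓝 (Real.exp (-gevTail γ y'))) := (hlim y' hy').comp (sbm_floor_atTop hs)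
    exact sbm_limsup_le hle hg (Eventually.of_forall fun r => hF0 _ _)
  have key_lo : ∀ y'' : ℝ, y'' < y → 1 + γ * y'' > 0 →
      Real.exp (-gevTail γ y'') ≤ liminf f atTop := by
    intro y'' hyy' hy'
    have hconv : Tendsto (fun r : ℕ =>
        (a ⌊(r:ℝ)*s⌋₊ / a r) * y'' + (b ⌊(r:ℝ)*s⌋₊ - b r)/a r)
        atTop (𝓝 (s ^ γ * y'' + c)) := (hascale.mul_const y'').add hbscale
    have hlt : s ^ γ * y'' + c < x := by
      nlinarith [hxy, mul_lt_mul_of_pos_left hyy' hsγ]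
    have hev : ∀ᶠ r : ℕ in atTop,
        a ⌊(r:ℝ)*s⌋₊ * y'' + b ⌊(r:ℝ)*s⌋₊ ≤ a r * x + b r := by
      filter_upwards [hconv.eventually_lt_const hlt] with r hr
      rw [div_mul_eq_mul_div, ← add_div, div_lt_iff₀ (ha r)] at hr
      nlinarith [hr]
    have hle : ∀ᶠ r : ℕ in atTop,
        F ⌊(r:ℝ)*s⌋₊ (a ⌊(r:ℝ)*s⌋₊ * y'' + b ⌊(r:ℝ)*s⌋₊) ≤ f r := by
      filter_upwards [hev] with r hr
      exact hFm _ hr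
    have hg : Tendsto (fun r : ℕ => F ⌊(r:ℝ)*s⌋₊ (a ⌊(r:ℝ)*s⌋₊ * y'' + b ⌊(r:ℝ)*s⌋₊)) atTop
        (𝓝 (Real.exp (-gevTail γ y''))) := (hlim y'' hy').comp (sbm_floor_atTop hs)
    exact sbm_le_liminf hle hg (Eventually.of_forall fun r => hF1 _ _)
  have hopen : ∀ᶠ z in 𝓝 y, 1 + γ * z > 0 :=
    ((continuous_const.add (continuous_mul_left γ)).continuousAt).eventually_const_lt hy
  have hcont : Tendsto (fun z => Real.exp (-gevTail γ z)) (𝓝 y)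
      (𝓝 (Real.exp (-(s * gevTail γ x)))) := by
    rw [← htail]; exact (sbm_gev_contAt hy)
  have hup : limsup f atTop ≤ Real.exp (-(s * gevTail γ x)) := by
    refine ge_of_tendsto (hcont.mono_left (nhdsWithin_le_nhds (s := Set.Ioi y))) ?_
    filter_upwards [hopen.filter_mono nhdsWithin_le_nhds, self_mem_nhdsWithin] with z hz hzy
    exact key_up z hzy hz
  have hlo : Real.exp (-(s * gevTail γ x)) ≤ liminf f atTop := by
    refine le_of_tendsto (hcont.mono_left (nhdsWithin_le_nhds (s := Set.Iio y))) ?_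
    filter_upwards [hopen.filter_mono nhdsWithin_le_nhds, self_mem_nhdsWithin] with z hz hzy
    exact key_lo z hzy hz
  exact tendsto_of_le_liminf_of_limsup_le hlo hup
    (isBoundedUnder_of ⟨1, fun r => hF1 _ _⟩)
    (isBoundedUnder_of ⟨0, fun r => hF0 _ _⟩)

lemma sbm_lemD (F : ℕ → ℝ → ℝ)
    (hFanti : ∀ u : ℝ, Antitone (fun m => F m u))
    (hF0 : ∀ m u, 0 ≤ F m u) (hF1 : ∀ m u, F m u ≤ 1)
    (u : ℕ → ℝ) (T : ℝ)
    (hC : ∀ s' : ℝ, 0 < s' →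
      Tendsto (fun r : ℕ => F ⌊(r : ℝ) * s'⌋₊ (u r)) atTop (𝓝 (Real.exp (-(s' * T)))))
    (k : ℕ → ℕ) {s : ℝ} (hs : 0 < s)
    (hk : Tendsto (fun r : ℕ => (k r : ℝ) / r) atTop (𝓝 s)) :
    Tendsto (fun r : ℕ => F (k r) (u r)) atTop (𝓝 (Real.exp (-(s * T)))) := by
  set f : ℕ → ℝ := fun r : ℕ => F (k r) (u r) with hf
  have key_up : ∀ s' : ℝ, 0 < s' → s' < s →
      limsup f atTop ≤ Real.exp (-(s' * T)) := by
    intro s' hs0 hs'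
    have hev : ∀ᶠ r : ℕ in atTop, ⌊(r : ℝ) * s'⌋₊ ≤ k r := by
      filter_upwards [hk.eventually_const_lt hs', eventually_ge_atTop 1] with r h1 h2
      have hr0 : (0:ℝ) < (r:ℝ) := by exact_mod_cast h2
      rw [lt_div_iff₀ hr0] at h1
      calc ⌊(r:ℝ) * s'⌋₊ ≤ ⌊((k r : ℕ) : ℝ)⌋₊ :=
            Nat.floor_le_floor (by nlinarith)
        _ = k r := Nat.floor_natCast _
    have hle : ∀ᶠ r : ℕ in atTop, f r ≤ F ⌊(r:ℝ)*s'⌋₊ (u r) :=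
      hev.mono fun r hr => hFanti (u r) hr
    exact sbm_limsup_le hle (hC s' hs0) (Eventually.of_forall fun r => hF0 _ _)
  have key_lo : ∀ s'' : ℝ, s < s'' →
      Real.exp (-(s'' * T)) ≤ liminf f atTop := by
    intro s'' hs'
    have hev : ∀ᶠ r : ℕ in atTop, k r ≤ ⌊(r : ℝ) * s''⌋₊ := by
      filter_upwards [hk.eventually_lt_const hs', eventually_ge_atTop 1] with r h1 h2
      have hr0 : (0:ℝ) < (r:ℝ) := by exact_mod_cast h2
      rw [div_lt_iff₀ hr0] at h1
      exact Nat.le_floor (by nlinarith)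
    have hle : ∀ᶠ r : ℕ in atTop, F ⌊(r:ℝ)*s''⌋₊ (u r) ≤ f r :=
      hev.mono fun r hr => hFanti (u r) hr
    exact sbm_le_liminf hle (hC s'' (lt_trans hs hs')) (Eventually.of_forall fun r => hF1 _ _)
  have hcont : Tendsto (fun z : ℝ => Real.exp (-(z * T))) (𝓝 s)
      (𝓝 (Real.exp (-(s * T)))) := by
    apply Continuous.tendsto
    fun_prop
  have hup : limsup f atTop ≤ Real.exp (-(s * T)) := by
    refine ge_of_tendsto (hcont.mono_left (nhdsWithin_le_nhds (s := Set.Iio s))) ?_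
    filter_upwards [(lt_mem_nhds hs).filter_mono nhdsWithin_le_nhds, self_mem_nhdsWithin]
      with z hz hzy
    exact key_up z hz hzy
  have hlo : Real.exp (-(s * T)) ≤ liminf f atTop := by
    refine le_of_tendsto (hcont.mono_left (nhdsWithin_le_nhds (s := Set.Ioi s))) ?_
    filter_upwards [self_mem_nhdsWithin] with z hzy
    exact key_lo z hzy
  exact tendsto_of_le_liminf_of_limsup_le hlo hup
    (isBoundedUnder_of ⟨1, fun r => hF1 _ _⟩)
    (isBoundedUnder_of ⟨0, fun r => hF0 _ _⟩)

/-- Lemma 2.3 (asymptotic stationarity of sliding block maxima under sampling scheme (S2)):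
let `(X_t)` be a strictly stationary sequence in the max-domain of attraction of `G_γ` with
scaling sequences `a_r > 0, b_r` satisfying the regular-variation conditions, and let `X'`
be an independent copy of the process `X`. Under scheme (S2), the sliding block maximum over
indices `{1+⌊rξ⌋, …, r+⌊rξ⌋}` equals the maximum of the concatenated sequence
(season one: `X`, season two: `X'`) over that window; affinely rescaled by `(a_r, b_r)`, it
converges in distribution to `G_γ` as `r → ∞`, for every `ξ ∈ [0,1]`. -/
theorem sliding_block_max_S2_weak_conv {Ω : Type*} [MeasureSpace Ω]
    [IsProbabilityMeasure (ℙ : Measure Ω)]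
    (X X' : ℕ → Ω → ℝ) (hX : ∀ i, Measurable (X i)) (hX' : ∀ i, Measurable (X' i))
    (a : ℕ → ℝ) (b : ℕ → ℝ) (γ : ℝ) (ha : ∀ r, 0 < a r)
    -- strict stationarity of (X_t)
    (hstat : ∀ k m : ℕ,
      Measure.map (fun ω => fun i : Fin m => X (i + k) ω) ℙ =
        Measure.map (fun ω => fun i : Fin m => X i ω) ℙ)
    -- X' is an independent copy of the process X
    (hcopy : Measure.map (fun ω => fun n : ℕ => X n ω) ℙ =
      Measure.map (fun ω => fun n : ℕ => X' n ω) ℙ)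
    (hindep : IndepFun (fun ω => fun n : ℕ => X n ω) (fun ω => fun n : ℕ => X' n ω) ℙ)
    -- regular variation of the scaling sequences
    (hascale : ∀ s : ℝ, 0 < s →
      Tendsto (fun r : ℕ => a (Nat.floor ((r : ℝ) * s)) / a r) atTop (nhds (s ^ γ)))
    (hbscale : ∀ s : ℝ, 0 < s →
      Tendsto (fun r : ℕ => (b (Nat.floor ((r : ℝ) * s)) - b r) / a r) atTop
        (nhds (if γ = 0 then Real.log s else (s ^ γ - 1) / γ)))
    -- max-domain of attraction: (max(X_1,…,X_r) - b_r)/a_r → G_γ in distribution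
    (hmda : ∀ x : ℝ, 1 + γ * x > 0 →
      Tendsto (fun r : ℕ => (ℙ {ω | (⨆ i : Fin r, X i ω) ≤ a r * x + b r}).toReal) atTop
        (nhds (Real.exp (-gevTail γ x)))) :
    ∀ ξ ∈ Set.Icc (0 : ℝ) 1, ∀ x : ℝ, 1 + γ * x > 0 →
      Tendsto (fun r : ℕ =>
        (ℙ {ω | (⨆ i : Fin r,
            if Nat.floor ((r : ℝ) * ξ) + (i : ℕ) < r then
              X (Nat.floor ((r : ℝ) * ξ) + (i : ℕ)) ω
            else X' (Nat.floor ((r : ℝ) * ξ) + (i : ℕ) - r) ω) ≤ a r * x + b r}).toReal)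
        atTop (nhds (Real.exp (-gevTail γ x))) := by
  intro ξ hξ x hx
  -- general measurability of cylinder-type sets in path space
  have hmeasS : ∀ (c : ℕ → ℕ) (m : ℕ) (u : ℝ),
      MeasurableSet {f : ℕ → ℝ | ∀ i < m, f (c i) ≤ u} := by
    intro c m u
    have h : {f : ℕ → ℝ | ∀ i < m, f (c i) ≤ u}
        = ⋂ i ∈ Set.Iio m, (fun f : ℕ → ℝ => f (c i)) ⁻¹' Set.Iic u := by
      ext f; simp [Set.mem_iInter]
    rw [h]
    exact MeasurableSet.biInter (Set.to_countable _)
      fun i _ => (measurable_pi_apply (c i)) measurableSet_Iic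
  set Φ : Ω → ℕ → ℝ := fun ω n => X n ω with hΦdef
  set Φ' : Ω → ℕ → ℝ := fun ω n => X' n ω with hΦ'def
  have hΦm : Measurable Φ := measurable_pi_lambda _ hX
  have hΦ'm : Measurable Φ' := measurable_pi_lambda _ hX'
  -- the cdf of the running maximum
  set F : ℕ → ℝ → ℝ := fun m u => (ℙ {ω | ∀ i < m, X i ω ≤ u}).toReal with hFdef
  have hF0 : ∀ m u, 0 ≤ F m u := fun m u => ENNReal.toReal_nonneg
  have hF1 : ∀ m u, F m u ≤ 1 := by
    intro m u
    have h := prob_le_one (μ := (ℙ : Measure Ω)) (s := {ω | ∀ i < m, X i ω ≤ u})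
    simpa using ENNReal.toReal_mono ENNReal.one_ne_top h
  have hFm : ∀ m, Monotone (F m) := by
    intro m u v huv
    apply ENNReal.toReal_mono (measure_ne_top _ _)
    apply measure_mono
    intro ω hω i hi
    exact le_trans (hω i hi) huv
  have hFanti : ∀ u : ℝ, Antitone fun m => F m u := by
    intro u m m' hmm'
    apply ENNReal.toReal_mono (measure_ne_top _ _)
    apply measure_mono
    intro ω hω i hi
    exact hω i (lt_of_lt_of_le hi hmm')
  -- sup over Fin m vs pointwise
  have hsup : ∀ (g : ℕ → Ω → ℝ) (m : ℕ), 0 < m → ∀ u : ℝ,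
      {ω | (⨆ i : Fin m, g i ω) ≤ u} = {ω | ∀ i < m, g i ω ≤ u} := by
    intro g m hm u
    haveI : Nonempty (Fin m) := Fin.pos_iff_nonempty.mp hm
    ext ω
    simp only [Set.mem_setOf_eq]
    rw [ciSup_le_iff (Set.finite_range _).bddAbove]
    exact ⟨fun h i hi => h ⟨i, hi⟩, fun h i => h i i.isLt⟩
  have hmda' : ∀ z : ℝ, 1 + γ * z > 0 →
      Tendsto (fun r : ℕ => F r (a r * z + b r)) atTop (𝓝 (Real.exp (-gevTail γ z))) := by
    intro z hz
    refine (hmda z hz).congr' ?_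
    filter_upwards [eventually_ge_atTop 1] with r hr
    simp only [hFdef]
    rw [hsup X r hr]
  -- copy step
  have hcopyP : ∀ (S : Set (ℕ → ℝ)), MeasurableSet S → ℙ (Φ' ⁻¹' S) = ℙ (Φ ⁻¹' S) := by
    intro S hS
    rw [← Measure.map_apply hΦ'm hS, ← Measure.map_apply hΦm hS, hcopy]
  -- stationarity step
  have hstatP : ∀ (kk m : ℕ) (u : ℝ),
      ℙ {ω | ∀ i < m, X (kk + i) ω ≤ u} = ℙ {ω | ∀ i < m, X i ω ≤ u} := by
    intro kk m u
    have hSm : MeasurableSet {v : Fin m → ℝ | ∀ i, v i ≤ u} := by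
      have h : {v : Fin m → ℝ | ∀ i, v i ≤ u} = Set.univ.pi fun _ => Set.Iic u := by
        ext v; simp [Set.mem_pi, Pi.le_def]
      rw [h]; exact MeasurableSet.univ_pi fun i => measurableSet_Iic
    have h1 : {ω | ∀ i < m, X (kk + i) ω ≤ u}
        = (fun ω => fun i : Fin m => X (i + kk) ω) ⁻¹' {v | ∀ i, v i ≤ u} := by
      ext ω
      simp only [Set.mem_setOf_eq, Set.mem_preimage]
      constructor
      · intro h i; rw [add_comm]; exact h i i.isLt
      · intro h i hi; have := h ⟨i, hi⟩; rwa [add_comm] at this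
    have h2 : {ω | ∀ i < m, X i ω ≤ u}
        = (fun ω => fun i : Fin m => X i ω) ⁻¹' {v | ∀ i, v i ≤ u} := by
      ext ω; simp only [Set.mem_setOf_eq, Set.mem_preimage]
      exact ⟨fun h i => h i i.isLt, fun h i hi => h ⟨i, hi⟩⟩
    rw [h1, h2, ← Measure.map_apply (measurable_pi_lambda _ fun i => hX _) hSm,
      ← Measure.map_apply (measurable_pi_lambda _ fun i => hX _) hSm, hstat kk m]
  rcases eq_or_lt_of_le hξ.1 with hξ0 | hξpos
  · -- ξ = 0
    rw [← hξ0]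
    have hterm : ∀ (r : ℕ) (i : Fin r) (ω : Ω),
        (if Nat.floor ((r : ℝ) * 0) + (i : ℕ) < r then
            X (Nat.floor ((r : ℝ) * 0) + (i : ℕ)) ω
          else X' (Nat.floor ((r : ℝ) * 0) + (i : ℕ) - r) ω) = X i ω := by
      intro r i ω
      simp only [mul_zero, Nat.floor_zero, zero_add]
      exact if_pos i.isLt
    simp only [hterm]
    exact hmda x hx
  rcases eq_or_lt_of_le hξ.2 with hξ1 | hξlt
  · -- ξ = 1
    rw [hξ1]
    have hterm : ∀ (r : ℕ) (i : Fin r) (ω : Ω),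
        (if Nat.floor ((r : ℝ) * 1) + (i : ℕ) < r then
            X (Nat.floor ((r : ℝ) * 1) + (i : ℕ)) ω
          else X' (Nat.floor ((r : ℝ) * 1) + (i : ℕ) - r) ω) = X' i ω := by
      intro r i ω
      simp only [mul_one, Nat.floor_natCast]
      rw [if_neg (by omega)]
      congr 1
      omega
    simp only [hterm]
    refine (hmda x hx).congr' ?_
    filter_upwards [eventually_ge_atTop 1] with r hr
    rw [hsup X r hr, hsup X' r hr]
    congr 1
    have hS := hcopyP {f : ℕ → ℝ | ∀ i < r, f i ≤ a r * x + b r}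
      (hmeasS (fun i => i) r (a r * x + b r))
    exact hS.symm
  · -- 0 < ξ < 1
    set u : ℕ → ℝ := fun r => a r * x + b r with hudef
    set k : ℕ → ℕ := fun r => ⌊(r : ℝ) * ξ⌋₊ with hkdef
    have hkdiv : Tendsto (fun r : ℕ => ((k r : ℕ) : ℝ) / r) atTop (𝓝 ξ) :=
      sbm_floor_div hξpos.le
    have hkler : ∀ r : ℕ, k r ≤ r := by
      intro r
      have h : (r : ℝ) * ξ ≤ ((r : ℕ) : ℝ) := by
        nlinarith [hξ.2, Nat.cast_nonneg (α := ℝ) r]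
      calc k r ≤ ⌊((r : ℕ) : ℝ)⌋₊ := Nat.floor_le_floor h
        _ = r := Nat.floor_natCast _
    have hmdiv : Tendsto (fun r : ℕ => ((r - k r : ℕ) : ℝ) / r) atTop (𝓝 (1 - ξ)) := by
      refine Tendsto.congr' ?_ (tendsto_const_nhds.sub hkdiv)
      filter_upwards [eventually_ge_atTop 1] with r hr
      have hr0 : (0:ℝ) < (r:ℝ) := by exact_mod_cast hr
      rw [Nat.cast_sub (hkler r), sub_div, div_self (ne_of_gt hr0)]
    have hCgen : ∀ s' : ℝ, 0 < s' →
        Tendsto (fun r : ℕ => F ⌊(r:ℝ)*s'⌋₊ (u r)) atTop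
          (𝓝 (Real.exp (-(s' * gevTail γ x)))) :=
      fun s' hs' => sbm_lemC F hFm hF0 hF1 a b γ ha hs'
        (hascale s' hs') (hbscale s' hs') hmda' x hx
    have hlim1 : Tendsto (fun r : ℕ => F (r - k r) (u r)) atTop
        (𝓝 (Real.exp (-((1-ξ) * gevTail γ x)))) :=
      sbm_lemD F hFanti hF0 hF1 u _ hCgen (fun r => r - k r) (by linarith) hmdiv
    have hlim2 : Tendsto (fun r : ℕ => F (k r) (u r)) atTop
        (𝓝 (Real.exp (-(ξ * gevTail γ x)))) :=
      sbm_lemD F hFanti hF0 hF1 u _ hCgen k hξpos hkdiv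
    have hprod := hlim1.mul hlim2
    rw [← Real.exp_add] at hprod
    have hsum : -((1-ξ) * gevTail γ x) + -(ξ * gevTail γ x) = -gevTail γ x := by ring
    rw [hsum] at hprod
    refine hprod.congr' ?_
    have hk1 : ∀ᶠ r : ℕ in atTop, 1 ≤ k r :=
      (sbm_floor_atTop hξpos).eventually_ge_atTop 1
    filter_upwards [hk1, eventually_ge_atTop 1] with r hkr hr
    have hr0 : (0:ℝ) < (r:ℝ) := by exact_mod_cast hr
    have hklt : k r < r := by
      have h1 : ((k r : ℕ) : ℝ) ≤ (r : ℝ) * ξ := Nat.floor_le (by positivity)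
      have h2 : (r : ℝ) * ξ < (r : ℝ) := by nlinarith
      exact_mod_cast lt_of_le_of_lt h1 h2
    -- factorize the event
    have hset : {ω : Ω | (⨆ i : Fin r,
          if Nat.floor ((r : ℝ) * ξ) + (i : ℕ) < r then
            X (Nat.floor ((r : ℝ) * ξ) + (i : ℕ)) ω
          else X' (Nat.floor ((r : ℝ) * ξ) + (i : ℕ) - r) ω) ≤ u r}
        = (Φ ⁻¹' {f : ℕ → ℝ | ∀ i < r - k r, f (k r + i) ≤ u r})
          ∩ (Φ' ⁻¹' {f : ℕ → ℝ | ∀ j < k r, f j ≤ u r}) := by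
      rw [hsup (fun n ω => if k r + n < r then X (k r + n) ω else X' (k r + n - r) ω)
        r hr (u r)]
      ext ω
      simp only [Set.mem_setOf_eq, Set.mem_inter_iff, Set.mem_preimage]
      constructor
      · intro h
        constructor
        · intro i hi
          have h' := h i (by omega)
          rwa [if_pos (by omega)] at h'
        · intro j hj
          have h' := h (r - k r + j) (by omega)
          rw [if_neg (by omega)] at h'
          have he : k r + (r - k r + j) - r = j := by omega
          rwa [he] at h'
      · rintro ⟨h1, h2⟩ n hn
        by_cases hc : k r + n < r
        · rw [if_pos hc]
          exact h1 n (by omega)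
        · rw [if_neg hc]
          exact h2 (k r + n - r) (by omega)
    rw [hset]
    have hfact := hindep.measure_inter_preimage_eq_mul
      {f : ℕ → ℝ | ∀ i < r - k r, f (k r + i) ≤ u r}
      {f : ℕ → ℝ | ∀ j < k r, f j ≤ u r}
      (hmeasS (fun i => k r + i) (r - k r) (u r))
      (hmeasS (fun j => j) (k r) (u r))
    have hA : ℙ (Φ ⁻¹' {f : ℕ → ℝ | ∀ i < r - k r, f (k r + i) ≤ u r})
        = ℙ {ω | ∀ i < r - k r, X i ω ≤ u r} := hstatP (k r) (r - k r) (u r)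
    have hB : ℙ (Φ' ⁻¹' {f : ℕ → ℝ | ∀ j < k r, f j ≤ u r})
        = ℙ {ω | ∀ j < k r, X j ω ≤ u r} :=
      hcopyP {f : ℕ → ℝ | ∀ j < k r, f j ≤ u r} (hmeasS (fun j => j) (k r) (u r))
    rw [hfact, hA, hB, ENNReal.toReal_mul]
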